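/- Let M and μ be monomials in K[x_1,…,x_n] and k ≥ 1 an integer, and suppose some monomial of Borel(M^k) divides μ. Let P be the unique minimal monomial, under the Borel order, of Borel(M^k) dividing μ. Suppose P' ∈ Borel(M^k) divides μ, P' ≠ P, and P' factors as P' = P'_1⋯P'_k with each P'_ℓ ∈ Borel(M). Then there exist indices 1 ≤ i < j ≤ n and 1 ≤ ℓ ≤ k such that x_i divides P'_ℓ, (x_j/x_i)·P'_ℓ ∈ Borel(M), (x_j/x_i)·P' divides μ, and (x_j/x_i)·P' ∈ Borel(M^k). -/

import Mathlib

/-- A Borel move: `m'` is obtained from `m` by replacing one factor `x_j` by `x_i` with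
`i < j` (variables are indexed so that `x_i` corresponds to `i : Fin n`). -/
def BorelStep (n : ℕ) (m m' : Fin n →₀ ℕ) : Prop :=
  ∃ i j : Fin n, i < j ∧ 0 < m j ∧ m' + Finsupp.single j 1 = m + Finsupp.single i 1

/-- `Borel(M)`: the set of monomials (exponent vectors) obtainable from `M` by finite
sequences of Borel moves, including `M` itself. -/
def BorelSet (n : ℕ) (M : Fin n →₀ ℕ) : Set (Fin n →₀ ℕ) :=
  {m | Relation.ReflTransGen (BorelStep n) M m}

namespace BorelAux

variable {n : ℕ}

def pre (m : Fin n →₀ ℕ) (t : ℕ) : ℕ := ∑ r : Fin n, if (r : ℕ) < t then m r else 0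

lemma pre_zero (m : Fin n →₀ ℕ) : pre m 0 = 0 := by simp [pre]

lemma pre_mono (m : Fin n →₀ ℕ) {a b : ℕ} (h : a ≤ b) : pre m a ≤ pre m b := by
  apply Finset.sum_le_sum; intro r _
  split_ifs with h1 h2
  · exact le_rfl
  · omega
  · exact Nat.zero_le _
  · exact le_rfl

lemma pre_add (a b : Fin n →₀ ℕ) (t : ℕ) : pre (a + b) t = pre a t + pre b t := by
  unfold pre
  rw [← Finset.sum_add_distrib]
  refine Finset.sum_congr rfl fun r _ => ?_
  simp only [Finsupp.add_apply]
  split_ifs <;> simp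

lemma pre_single (i : Fin n) (c t : ℕ) :
    pre (Finsupp.single i c) t = if (i : ℕ) < t then c else 0 := by
  unfold pre
  rw [Finset.sum_eq_single i]
  · simp
  · intro r _ hr
    rw [Finsupp.single_eq_of_ne hr]
    simp
  · simp

lemma pre_smul (k : ℕ) (M : Fin n →₀ ℕ) (t : ℕ) : pre (k • M) t = k * pre M t := by
  unfold pre
  rw [Finset.mul_sum]
  refine Finset.sum_congr rfl fun r _ => ?_
  simp [Finsupp.smul_apply, mul_ite]

lemma pre_finsetsum {ι : Type*} (s : Finset ι) (f : ι → (Fin n →₀ ℕ)) (t : ℕ) :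
    pre (∑ l ∈ s, f l) t = ∑ l ∈ s, pre (f l) t := by
  classical
  induction s using Finset.induction_on with
  | empty => simp [pre]
  | insert a s h ih => rw [Finset.sum_insert h, pre_add, ih, Finset.sum_insert h]

lemma pre_stable (m : Fin n →₀ ℕ) {t : ℕ} (h : n ≤ t) : pre m t = pre m n := by
  unfold pre
  refine Finset.sum_congr rfl fun r _ => ?_
  have := r.isLt
  rw [if_pos (by omega), if_pos (by omega)]

lemma pre_succ (m : Fin n →₀ ℕ) {t : ℕ} (ht : t < n) :
    pre m (t + 1) = pre m t + m ⟨t, ht⟩ := by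
  have key : ∀ r : Fin n, (if (r : ℕ) < t + 1 then m r else 0)
      = (if (r : ℕ) < t then m r else 0) + (if r = ⟨t, ht⟩ then m r else 0) := by
    intro r
    by_cases h : r = ⟨t, ht⟩
    · subst h; simp
    · have h' : (r : ℕ) ≠ t := fun hc => h (Fin.ext hc)
      rw [if_neg h, add_zero]
      have hiff : ((r : ℕ) < t + 1) ↔ ((r : ℕ) < t) := by omega
      simp [hiff]
  calc pre m (t + 1)
      = ∑ r : Fin n, ((if (r : ℕ) < t then m r else 0) + (if r = ⟨t, ht⟩ then m r else 0)) :=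
        Finset.sum_congr rfl (fun r _ => key r)
    _ = pre m t + m ⟨t, ht⟩ := by
        rw [Finset.sum_add_distrib]
        congr 1
        simp [Finset.sum_ite_eq']

lemma pre_interval (m : Fin n →₀ ℕ) {a b : ℕ} (hab : a ≤ b) :
    pre m b = pre m a + ∑ r : Fin n, if a ≤ (r : ℕ) ∧ (r : ℕ) < b then m r else 0 := by
  unfold pre
  rw [← Finset.sum_add_distrib]
  refine Finset.sum_congr rfl fun r _ => ?_
  split_ifs <;> omega

lemma ext_of_pre {A B : Fin n →₀ ℕ} (h : ∀ t, pre A t = pre B t) : A = B := by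
  ext r
  have h1 := pre_succ A r.isLt
  have h2 := pre_succ B r.isLt
  have h3 := h (r : ℕ)
  have h4 := h ((r : ℕ) + 1)
  simp only [Fin.eta] at h1 h2
  omega

lemma rtg_pre {A B : Fin n →₀ ℕ} (h : Relation.ReflTransGen (BorelStep n) A B) :
    (∀ t, pre A t ≤ pre B t) ∧ pre A n = pre B n := by
  induction h with
  | refl => exact ⟨fun t => le_rfl, rfl⟩
  | tail hab hstep ih =>
    obtain ⟨i, j, hij, hpos, heq⟩ := hstep
    have hij' : (i : ℕ) < (j : ℕ) := hij
    rename_i b c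
    have key : ∀ t, pre c t + (if (j : ℕ) < t then 1 else 0)
        = pre b t + (if (i : ℕ) < t then 1 else 0) := by
      intro t
      have := congrArg (fun m => pre m t) heq
      simpa [pre_add, pre_single] using this
    constructor
    · intro t
      have hk := key t
      have h1 := ih.1 t
      split_ifs at hk <;> omega
    · have hk := key n
      rw [if_pos j.isLt, if_pos i.isLt] at hk
      have := ih.2
      omega

lemma mem_of_pre_le : ∀ (D : ℕ) (A B : Fin n →₀ ℕ),
    (∑ t ∈ Finset.range (n + 1), (pre B t - pre A t)) ≤ D →
    pre A n = pre B n → (∀ t, pre A t ≤ pre B t) →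
    Relation.ReflTransGen (BorelStep n) A B := by
  intro D
  induction D with
  | zero =>
    intro A B hsum hdeg hdom
    have hall : ∀ t, pre A t = pre B t := by
      intro t
      rcases le_or_gt t n with ht | ht
      · have hmem : t ∈ Finset.range (n + 1) := by simp; omega
        have h0 := Finset.sum_eq_zero_iff.mp (Nat.le_zero.mp hsum) t hmem
        have := hdom t; omega
      · rw [pre_stable A (le_of_lt ht), pre_stable B (le_of_lt ht), hdeg]
    exact (ext_of_pre hall) ▸ Relation.ReflTransGen.refl
  | succ D ih =>
    intro A B hsum hdeg hdom
    by_cases hAB : ∀ t, pre A t = pre B t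
    · exact (ext_of_pre hAB) ▸ Relation.ReflTransGen.refl
    push_neg at hAB
    have hex : ∃ t, pre A t < pre B t := by
      obtain ⟨t, ht⟩ := hAB; exact ⟨t, lt_of_le_of_ne (hdom t) ht⟩
    classical
    obtain ⟨s, hsspec, hsmin⟩ : ∃ s, pre A s < pre B s ∧ ∀ u < s, ¬ pre A u < pre B u :=
      ⟨Nat.find hex, Nat.find_spec hex, fun u hu => Nat.find_min hex hu⟩
    have hspos : 0 < s := by
      rcases Nat.eq_zero_or_pos s with h0 | h
      · rw [h0, pre_zero, pre_zero] at hsspec; omega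
      · exact h
    have hsn : s < n := by
      by_contra hge
      push_neg at hge
      rw [pre_stable A hge, pre_stable B hge, hdeg] at hsspec; omega
    have hex2 : ∃ u, s < u ∧ pre B u ≤ pre A u := ⟨n, hsn, hdeg.ge⟩
    obtain ⟨e, ⟨hse, heB⟩, hen, hemin⟩ :
        ∃ e, (s < e ∧ pre B e ≤ pre A e) ∧ e ≤ n ∧
          ∀ u < e, ¬ (s < u ∧ pre B u ≤ pre A u) :=
      ⟨Nat.find hex2, Nat.find_spec hex2, Nat.find_le ⟨hsn, hdeg.ge⟩,
        fun u hu => Nat.find_min hex2 hu⟩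
    have hstrict : ∀ u, s ≤ u → u < e → pre A u < pre B u := by
      intro u h1 h2
      rcases eq_or_lt_of_le h1 with rfl | h
      · exact hsspec
      · by_contra hc
        exact (hemin u h2) ⟨h, not_lt.mp hc⟩
    have hjn : e - 1 < n := by omega
    have hin : s - 1 < n := by omega
    have hA_j : 0 < A ⟨e - 1, hjn⟩ := by
      have h1 := pre_succ A hjn
      have h2 : e - 1 + 1 = e := by omega
      rw [h2] at h1
      have h3 := hstrict (e - 1) (by omega) (by omega)
      have h4 := pre_mono B (show e - 1 ≤ e by omega)
      omega
    have hle : Finsupp.single (⟨e - 1, hjn⟩ : Fin n) 1 ≤ A := Finsupp.single_le_iff.mpr hA_j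
    set A' := A - Finsupp.single (⟨e - 1, hjn⟩ : Fin n) 1
        + Finsupp.single (⟨s - 1, hin⟩ : Fin n) 1 with hA'
    have heqA : A' + Finsupp.single (⟨e - 1, hjn⟩ : Fin n) 1
        = A + Finsupp.single (⟨s - 1, hin⟩ : Fin n) 1 := by
      rw [hA', add_right_comm, tsub_add_cancel_of_le hle]
    have hstepA : BorelStep n A A' :=
      ⟨⟨s - 1, hin⟩, ⟨e - 1, hjn⟩, Fin.mk_lt_mk.mpr (by omega), hA_j, heqA⟩
    have keyA' : ∀ t, pre A' t + (if e - 1 < t then 1 else 0)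
        = pre A t + (if s - 1 < t then 1 else 0) := by
      intro t
      have := congrArg (fun m => pre m t) heqA
      simpa [pre_add, pre_single] using this
    have hdom' : ∀ t, pre A' t ≤ pre B t := by
      intro t
      have hkk := keyA' t
      by_cases h1 : s - 1 < t
      · by_cases h2 : e - 1 < t
        · rw [if_pos h1, if_pos h2] at hkk; have := hdom t; omega
        · rw [if_pos h1, if_neg h2] at hkk
          have := hstrict t (by omega) (by omega); omega
      · rw [if_neg h1, if_neg (show ¬ e - 1 < t by omega)] at hkk
        have := hdom t; omega
    have hdeg' : pre A' n = pre B n := by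
      have hkk := keyA' n
      rw [if_pos (show e - 1 < n by omega), if_pos (show s - 1 < n by omega)] at hkk
      omega
    have hsum' : (∑ t ∈ Finset.range (n + 1), (pre B t - pre A' t)) ≤ D := by
      have hlt : (∑ t ∈ Finset.range (n + 1), (pre B t - pre A' t))
          < ∑ t ∈ Finset.range (n + 1), (pre B t - pre A t) := by
        apply Finset.sum_lt_sum
        · intro t _
          have hkk := keyA' t
          have := hdom' t
          split_ifs at hkk <;> omega
        · refine ⟨s, by simp; omega, ?_⟩
          have hkk := keyA' s
          rw [if_neg (show ¬ e - 1 < s by omega), if_pos (show s - 1 < s by omega)] at hkk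
          have h1 := hdom' s
          omega
      omega
    exact Relation.ReflTransGen.head hstepA (ih A' B hsum' hdeg' hdom')

lemma mem_of_dominates {A B : Fin n →₀ ℕ} (hdeg : pre A n = pre B n)
    (hdom : ∀ t, pre A t ≤ pre B t) : B ∈ BorelSet n A :=
  mem_of_pre_le _ A B le_rfl hdeg hdom

end BorelAux

open BorelAux

/-- Lemma 3.10: let `P` be the unique Borel-minimal monomial of `Borel(M^k)` dividing `μ`.
If `P' ∈ Borel(M^k)` divides `μ`, `P' ≠ P`, and `P' = P'_1 ⋯ P'_k` with each
`P'_ℓ ∈ Borel(M)`, then there are `i < j` and `ℓ` with `x_i ∣ P'_ℓ`,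
`(x_j/x_i)·P'_ℓ ∈ Borel(M)`, `(x_j/x_i)·P'` divides `μ`, and `(x_j/x_i)·P' ∈ Borel(M^k)`. -/
theorem borel_factorization_improve {n : ℕ} (M μ P P' : Fin n →₀ ℕ) (k : ℕ) (hk : 1 ≤ k)
    (hP : P ∈ BorelSet n (k • M)) (hPdvd : P ≤ μ)
    (hPmin : ∀ m ∈ BorelSet n (k • M), m ≤ μ → m ∈ BorelSet n P)
    (hP' : P' ∈ BorelSet n (k • M)) (hP'dvd : P' ≤ μ) (hne : P' ≠ P)
    (f : Fin k → (Fin n →₀ ℕ)) (hf : ∀ ℓ : Fin k, f ℓ ∈ BorelSet n M)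
    (hsum : ∑ ℓ, f ℓ = P') :
    ∃ (i j : Fin n) (ℓ : Fin k), i < j ∧ 0 < f ℓ i ∧
      f ℓ - Finsupp.single i 1 + Finsupp.single j 1 ∈ BorelSet n M ∧
      P' - Finsupp.single i 1 + Finsupp.single j 1 ≤ μ ∧
      P' - Finsupp.single i 1 + Finsupp.single j 1 ∈ BorelSet n (k • M) := by
  classical
  have hPfacts := rtg_pre hP
  have hPP' : P' ∈ BorelSet n P := hPmin P' hP' hP'dvd
  have hPP'facts := rtg_pre hPP'
  have hffacts : ∀ ℓ, (∀ t, pre M t ≤ pre (f ℓ) t) ∧ pre M n = pre (f ℓ) n :=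
    fun ℓ => rtg_pre (hf ℓ)
  -- choose j : largest index where P' and P differ
  have hne' : ∃ r : Fin n, P' r ≠ P r := by
    by_contra hc; push_neg at hc; exact hne (Finsupp.ext hc)
  set S : Finset (Fin n) := Finset.univ.filter (fun r => P' r ≠ P r) with hS
  have hSne : S.Nonempty := by
    obtain ⟨r, hr⟩ := hne'; exact ⟨r, by simp [hS, hr]⟩
  set j : Fin n := S.max' hSne with hjdef
  have hjS : P' j ≠ P j := by
    have := S.max'_mem hSne; simpa [hS] using this
  have hjmax : ∀ r : Fin n, (j : ℕ) < (r : ℕ) → P' r = P r := by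
    intro r hr
    by_contra hc
    have hrS : r ∈ S := by simp [hS, hc]
    have := S.le_max' r hrS
    have : (r : ℕ) ≤ (j : ℕ) := this
    omega
  -- prefix sums of P' and P agree above j
  have htail : pre P' ((j : ℕ) + 1) = pre P ((j : ℕ) + 1) := by
    have hjle : (j : ℕ) + 1 ≤ n := j.isLt
    have h1 := pre_interval P' hjle
    have h2 := pre_interval P hjle
    have h3 : (∑ r : Fin n, if (j : ℕ) + 1 ≤ (r : ℕ) ∧ (r : ℕ) < n then P' r else 0)
        = ∑ r : Fin n, if (j : ℕ) + 1 ≤ (r : ℕ) ∧ (r : ℕ) < n then P r else 0 := by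
      refine Finset.sum_congr rfl fun r _ => ?_
      split_ifs with h
      · exact hjmax r (by omega)
      · rfl
    have hdegPP' := hPP'facts.2
    omega
  have hPj : P' j < P j ∧ pre P (j : ℕ) < pre P' (j : ℕ) := by
    have h1 := pre_succ P' j.isLt
    have h2 := pre_succ P j.isLt
    simp only [Fin.eta] at h1 h2
    have h3 := hPP'facts.1 (j : ℕ)
    constructor <;> omega
  have hPdom : ∀ t, k * pre M t ≤ pre P t := fun t => by
    have := hPfacts.1 t; rwa [pre_smul] at this
  have hsumpre : ∀ t, pre P' t = ∑ ℓ, pre (f ℓ) t := by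
    intro t; rw [← hsum, pre_finsetsum]
  -- choose ℓ with strict inequality at j
  have hexl : ∃ ℓ : Fin k, pre M (j : ℕ) < pre (f ℓ) (j : ℕ) := by
    by_contra hc; push_neg at hc
    have hle : pre P' (j : ℕ) ≤ k * pre M (j : ℕ) := by
      rw [hsumpre]
      calc ∑ ℓ, pre (f ℓ) (j : ℕ) ≤ ∑ _ℓ : Fin k, pre M (j : ℕ) :=
            Finset.sum_le_sum (fun ℓ _ => hc ℓ)
        _ = k * pre M (j : ℕ) := by
            rw [Finset.sum_const, Finset.card_univ, Fintype.card_fin, smul_eq_mul]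
    have := hPdom (j : ℕ); have := hPj.2; omega
  obtain ⟨ℓ, hℓ⟩ := hexl
  -- i0 : the threshold below which strictness may fail
  set i0 := Nat.findGreatest (fun t => pre (f ℓ) t ≤ pre M t) (j : ℕ) with hi0def
  have hi0spec : pre (f ℓ) i0 ≤ pre M i0 :=
    Nat.findGreatest_spec (P := fun t => pre (f ℓ) t ≤ pre M t) (Nat.zero_le _)
      (by show pre (f ℓ) 0 ≤ pre M 0; rw [pre_zero, pre_zero])
  have hi0le : i0 ≤ (j : ℕ) := Nat.findGreatest_le _
  have hi0lt : i0 < (j : ℕ) := by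
    rcases eq_or_lt_of_le hi0le with h | h
    · rw [h] at hi0spec; omega
    · exact h
  have hstrictI : ∀ u, i0 < u → u ≤ (j : ℕ) → pre M u < pre (f ℓ) u := by
    intro u h1 h2
    have := Nat.findGreatest_is_greatest h1 h2
    omega
  -- choose i : an index in [i0, j) with positive entry of f ℓ
  have hexi : ∃ r : Fin n, i0 ≤ (r : ℕ) ∧ (r : ℕ) < (j : ℕ) ∧ 0 < f ℓ r := by
    by_contra hc; push_neg at hc
    have h1 := pre_interval (f ℓ) (le_of_lt hi0lt)
    have h2 : (∑ r : Fin n, if i0 ≤ (r : ℕ) ∧ (r : ℕ) < (j : ℕ) then f ℓ r else 0) = 0 := by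
      apply Finset.sum_eq_zero; intro r _
      split_ifs with h
      · have := hc r h.1 h.2; omega
      · rfl
    have h3 : pre M i0 ≤ pre M (j : ℕ) := pre_mono M (le_of_lt hi0lt)
    omega
  obtain ⟨i, hii0, hijn, hipos⟩ := hexi
  have hijF : i < j := hijn
  have hP'i : 0 < P' i := by
    have hle : f ℓ i ≤ P' i := by
      rw [← hsum, Finsupp.finset_sum_apply]
      exact Finset.single_le_sum (f := fun ℓ' => f ℓ' i) (fun _ _ => Nat.zero_le _)
        (Finset.mem_univ ℓ)
    omega
  -- key prefix identities for the two modified monomials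
  have hsle : Finsupp.single i 1 ≤ f ℓ := Finsupp.single_le_iff.mpr hipos
  have heqg : (f ℓ - Finsupp.single i 1 + Finsupp.single j 1) + Finsupp.single i 1
      = f ℓ + Finsupp.single j 1 := by
    rw [add_right_comm, tsub_add_cancel_of_le hsle]
  have keyg : ∀ t, pre (f ℓ - Finsupp.single i 1 + Finsupp.single j 1) t
      + (if (i : ℕ) < t then 1 else 0)
      = pre (f ℓ) t + (if (j : ℕ) < t then 1 else 0) := fun t => by
    have := congrArg (fun m => pre m t) heqg
    simpa [pre_add, pre_single] using this
  have hQle : Finsupp.single i 1 ≤ P' := Finsupp.single_le_iff.mpr hP'i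
  have heqQ : (P' - Finsupp.single i 1 + Finsupp.single j 1) + Finsupp.single i 1
      = P' + Finsupp.single j 1 := by
    rw [add_right_comm, tsub_add_cancel_of_le hQle]
  have keyQ : ∀ t, pre (P' - Finsupp.single i 1 + Finsupp.single j 1) t
      + (if (i : ℕ) < t then 1 else 0)
      = pre P' t + (if (j : ℕ) < t then 1 else 0) := fun t => by
    have := congrArg (fun m => pre m t) heqQ
    simpa [pre_add, pre_single] using this
  have hstrictP' : ∀ t, i0 < t → t ≤ (j : ℕ) → k * pre M t < pre P' t := by
    intro t h1 h2
    have hfl := hstrictI t h1 h2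
    have hsum_split : pre P' t = pre (f ℓ) t + ∑ ℓ' ∈ Finset.univ.erase ℓ, pre (f ℓ') t := by
      rw [hsumpre t, ← Finset.add_sum_erase _ _ (Finset.mem_univ ℓ)]
    have hrest : (Finset.univ.erase ℓ).card * pre M t
        ≤ ∑ ℓ' ∈ Finset.univ.erase ℓ, pre (f ℓ') t := by
      calc (Finset.univ.erase ℓ).card * pre M t
          = ∑ _ℓ' ∈ Finset.univ.erase ℓ, pre M t := by rw [Finset.sum_const, smul_eq_mul]
        _ ≤ _ := Finset.sum_le_sum (fun ℓ' _ => (hffacts ℓ').1 t)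
    have hcard : (Finset.univ.erase ℓ).card = k - 1 := by
      rw [Finset.card_erase_of_mem (Finset.mem_univ ℓ), Finset.card_univ, Fintype.card_fin]
    rw [hcard] at hrest
    have hmul : (k - 1) * pre M t + pre M t = k * pre M t := by
      have hkk : k - 1 + 1 = k := Nat.succ_pred_eq_of_pos hk
      calc (k - 1) * pre M t + pre M t = (k - 1 + 1) * pre M t := by ring
        _ = k * pre M t := by rw [hkk]
    omega
  refine ⟨i, j, ℓ, hijF, hipos, ?_, ?_, ?_⟩
  · -- (x_j/x_i)·f ℓ ∈ Borel(M)
    apply mem_of_dominates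
    · have hkk := keyg n
      rw [if_pos i.isLt, if_pos j.isLt] at hkk
      have := (hffacts ℓ).2
      omega
    · intro t
      have hkk := keyg t
      by_cases h1 : (i : ℕ) < t
      · by_cases h2 : (j : ℕ) < t
        · rw [if_pos h1, if_pos h2] at hkk
          have := (hffacts ℓ).1 t; omega
        · rw [if_pos h1, if_neg h2] at hkk
          have := hstrictI t (by omega) (by omega); omega
      · rw [if_neg h1, if_neg (show ¬ (j : ℕ) < t by omega)] at hkk
        have := (hffacts ℓ).1 t; omega
  · -- divisibility by μ
    refine Finsupp.le_def.mpr fun r => ?_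
    simp only [Finsupp.add_apply, Finsupp.tsub_apply, Finsupp.single_apply]
    have hμ1 : P' r ≤ μ r := Finsupp.le_def.mp hP'dvd r
    have hμ2 : P r ≤ μ r := Finsupp.le_def.mp hPdvd r
    rcases eq_or_ne r j with rfl | hrj
    · rw [if_neg (Fin.ne_of_lt hijF), if_pos rfl]
      have := hPj.1
      omega
    · rw [if_neg (Ne.symm hrj)]
      split_ifs <;> omega
  · -- membership in Borel(M^k)
    apply mem_of_dominates
    · have hkk := keyQ n
      rw [if_pos i.isLt, if_pos j.isLt] at hkk
      have h1 := hPfacts.2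
      have h2 := hPP'facts.2
      omega
    · intro t
      rw [pre_smul]
      have hkk := keyQ t
      by_cases h1 : (i : ℕ) < t
      · by_cases h2 : (j : ℕ) < t
        · rw [if_pos h1, if_pos h2] at hkk
          have := hPdom t; have := hPP'facts.1 t; omega
        · rw [if_pos h1, if_neg h2] at hkk
          have := hstrictP' t (by omega) (by omega); omega
      · rw [if_neg h1, if_neg (show ¬ (j : ℕ) < t by omega)] at hkk
        have := hPdom t; have := hPP'facts.1 t; omega
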